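/- Let r1, s1, r2, s2 be real numbers with rᵢ² + sᵢ² < 1 for i = 1, 2, define αᵢ, βᵢ, γᵢ as in the J_s-family, and let A = [[0,1,0,0],[-1,0,0,0],[0,0,0,1],[0,0,-1,0]]. Then the matrix G_s = A · J_s, which equals the block-diagonal matrix with blocks [[γ₁, -α₁], [-α₁, -β₁]] and [[γ₂, -α₂], [-α₂, -β₂]], is symmetric and positive definite; i.e. the bilinear form g_s(·, ·) = ω(·, J_s·) is a Riemannian metric whenever rᵢ² + sᵢ² < 1. -/

import Mathlib

open Matrix

lemma block_facts (r s α β γ : ℝ) (h : r ^ 2 + s ^ 2 < 1)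
    (hα : α = -2 * s / (r ^ 2 + s ^ 2 - 1))
    (hβ : β = (r ^ 2 + 2 * r + s ^ 2 + 1) / (r ^ 2 + s ^ 2 - 1))
    (hγ : γ = -(r ^ 2 - 2 * r + s ^ 2 + 1) / (r ^ 2 + s ^ 2 - 1)) :
    0 < γ ∧ γ * (-β) - α ^ 2 = 1 := by
  have hd : r ^ 2 + s ^ 2 - 1 < 0 := by linarith
  have hd0 : r ^ 2 + s ^ 2 - 1 ≠ 0 := ne_of_lt hd
  have hnum : 0 < r ^ 2 - 2 * r + s ^ 2 + 1 := by nlinarith [sq_nonneg (r - 1), sq_nonneg s]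
  constructor
  · rw [hγ]
    exact div_pos_of_neg_of_neg (by linarith) hd
  · rw [hα, hβ, hγ]
    field_simp
    ring
  
theorem stmt_3 (r1 s1 r2 s2 α1 β1 γ1 α2 β2 γ2 : ℝ)
    (h1 : r1 ^ 2 + s1 ^ 2 < 1) (h2 : r2 ^ 2 + s2 ^ 2 < 1)
    (hα1 : α1 = -2 * s1 / (r1 ^ 2 + s1 ^ 2 - 1))
    (hβ1 : β1 = (r1 ^ 2 + 2 * r1 + s1 ^ 2 + 1) / (r1 ^ 2 + s1 ^ 2 - 1))
    (hγ1 : γ1 = -(r1 ^ 2 - 2 * r1 + s1 ^ 2 + 1) / (r1 ^ 2 + s1 ^ 2 - 1))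
    (hα2 : α2 = -2 * s2 / (r2 ^ 2 + s2 ^ 2 - 1))
    (hβ2 : β2 = (r2 ^ 2 + 2 * r2 + s2 ^ 2 + 1) / (r2 ^ 2 + s2 ^ 2 - 1))
    (hγ2 : γ2 = -(r2 ^ 2 - 2 * r2 + s2 ^ 2 + 1) / (r2 ^ 2 + s2 ^ 2 - 1))
    (J A : Matrix (Fin 4) (Fin 4) ℝ)
    (hJ : J = !![α1, β1, 0, 0; γ1, -α1, 0, 0; 0, 0, α2, β2; 0, 0, γ2, -α2])
    (hA : A = !![0, 1, 0, 0; -1, 0, 0, 0; 0, 0, 0, 1; 0, 0, -1, 0]) :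
    A * J = !![γ1, -α1, 0, 0; -α1, -β1, 0, 0; 0, 0, γ2, -α2; 0, 0, -α2, -β2] ∧
      (A * J)ᵀ = A * J ∧ (A * J).PosDef := by
  obtain ⟨hγ1pos, hdet1⟩ := block_facts r1 s1 α1 β1 γ1 h1 hα1 hβ1 hγ1
  obtain ⟨hγ2pos, hdet2⟩ := block_facts r2 s2 α2 β2 γ2 h2 hα2 hβ2 hγ2
  have hprod : A * J = !![γ1, -α1, 0, 0; -α1, -β1, 0, 0; 0, 0, γ2, -α2; 0, 0, -α2, -β2] := by
    subst hJ hA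
    ext i j
    fin_cases i <;> fin_cases j <;>
      simp [Matrix.mul_apply, Fin.sum_univ_four, Matrix.vecHead, Matrix.vecTail]
  have hsymm : (A * J)ᵀ = A * J := by
    rw [hprod]
    ext i j
    fin_cases i <;> fin_cases j <;> simp [Matrix.vecHead, Matrix.vecTail]
  refine ⟨hprod, hsymm, ?_⟩
  rw [hprod]
  rw [posDef_iff_dotProduct_mulVec]
  constructor
  · rw [← hprod]
    exact hsymm
  · intro x hx
    have hx' : x 0 ≠ 0 ∨ x 1 ≠ 0 ∨ x 2 ≠ 0 ∨ x 3 ≠ 0 := by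
      by_contra h
      push_neg at h
      obtain ⟨h0, ha, hb, hc⟩ := h
      apply hx
      ext i
      fin_cases i <;> assumption
    simp [mulVec, dotProduct, Fin.sum_univ_four, Matrix.vecHead, Matrix.vecTail]
    have key : ∀ γ α β a b : ℝ, 0 < γ → γ * (-β) - α ^ 2 = 1 →
        0 ≤ a * (γ * a + -α * b) + b * (-α * a + -β * b) := by
      intro γ α β a b hγ hdet
      have h1 : 0 ≤ (γ * a - α * b) ^ 2 + b ^ 2 := by positivity
      have : γ * (a * (γ * a + -α * b) + b * (-α * a + -β * b)) =
          (γ * a - α * b) ^ 2 + (γ * (-β) - α ^ 2) * b ^ 2 := by ring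
      nlinarith [sq_nonneg b]
    have keypos : ∀ γ α β a b : ℝ, 0 < γ → γ * (-β) - α ^ 2 = 1 → (a ≠ 0 ∨ b ≠ 0) →
        0 < a * (γ * a + -α * b) + b * (-α * a + -β * b) := by
      intro γ α β a b hγ hdet hab
      have hsq : 0 < (γ * a - α * b) ^ 2 + b ^ 2 := by
        rcases hab with ha | hb
        · rcases eq_or_ne b 0 with rfl | hb
          · have : γ * a - α * 0 ≠ 0 := by simpa using mul_ne_zero (ne_of_gt hγ) ha
            positivity
          · positivity
        · positivity
      have heq : γ * (a * (γ * a + -α * b) + b * (-α * a + -β * b)) =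
          (γ * a - α * b) ^ 2 + (γ * (-β) - α ^ 2) * b ^ 2 := by ring
      nlinarith [sq_nonneg b]
    rcases hx' with h | h | h | h
    · have := keypos γ1 α1 β1 (x 0) (x 1) hγ1pos hdet1 (Or.inl h)
      have := key γ2 α2 β2 (x 2) (x 3) hγ2pos hdet2

      linarith
    · have := keypos γ1 α1 β1 (x 0) (x 1) hγ1pos hdet1 (Or.inr h)
      have := key γ2 α2 β2 (x 2) (x 3) hγ2pos hdet2
      linarith
    · have := keypos γ2 α2 β2 (x 2) (x 3) hγ2pos hdet2 (Or.inl h)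
      have := key γ1 α1 β1 (x 0) (x 1) hγ1pos hdet1
      linarith
    · have := keypos γ2 α2 β2 (x 2) (x 3) hγ2pos hdet2 (Or.inr h)
      have := key γ1 α1 β1 (x 0) (x 1) hγ1pos hdet1
      linarith
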